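/- Let Λ_R be defined by Λ_{Ra}{}^{cbd} = ¼(−g^{bc}δ^d_a + g^{cd}δ^b_a). Then Λ_R is antisymmetric in its last two indices b,d, and for a torsion-free, curvature-free connection with disformation L (so that ∇ = D + L with D Levi-Civita), the identity 4(1/√(−g))∇_d(√(−g) Λ_{Ra}{}^{cbd}) = Q_a{}^{bc} − ½ Q_a g^{bc} + (½ Q^c − Q̃^c) δ^b_a holds, where Q_a = g^{bc}Q_{abc} and Q̃^c = Q_b{}^{bc}. -/

import Mathlib

noncomputable section

open scoped BigOperators

/-- Partial derivative of a scalar field on coordinate space along coordinate `i`. -/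
def pd {n : ℕ} (i : Fin n) (f : (Fin n → ℝ) → ℝ) (x : Fin n → ℝ) : ℝ :=
  fderiv ℝ f x (Pi.single i 1)

/-- Non-metricity `Q_{abc} = ∇_a g_{bc}` of the connection `Γ^a_{bc}` (components
`Γ a b c`, with `b` the derivative index). -/
def nonmetQ {n : ℕ} (g : Fin n → Fin n → (Fin n → ℝ) → ℝ)
    (Γ : Fin n → Fin n → Fin n → (Fin n → ℝ) → ℝ) (a b c : Fin n) (x : Fin n → ℝ) : ℝ :=
  pd a (g b c) x - ∑ d, Γ d a b x * g d c x - ∑ d, Γ d a c x * g b d x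

/-- Torsion `T^a_{bc} = 2Γ^a_{[bc]} = Γ^a_{bc} − Γ^a_{cb}`. -/
def torsion {n : ℕ} (Γ : Fin n → Fin n → Fin n → (Fin n → ℝ) → ℝ)
    (a b c : Fin n) (x : Fin n → ℝ) : ℝ :=
  Γ a b c x - Γ a c b x

/-- Christoffel symbols (Levi-Civita connection) of the metric `g` with inverse `ginv`. -/
def christoffel {n : ℕ} (g ginv : Fin n → Fin n → (Fin n → ℝ) → ℝ)
    (a b c : Fin n) (x : Fin n → ℝ) : ℝ :=
  (1 / 2) * ∑ d, ginv a d x * (pd b (g d c) x + pd c (g d b) x - pd d (g b c) x)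

/-- Riemann curvature `R^a_{bcd} = 2∂_{[c}Γ^a_{d]b} + 2Γ^a_{[c|e|}Γ^e_{d]b}`. -/
def riem {n : ℕ} (Γ : Fin n → Fin n → Fin n → (Fin n → ℝ) → ℝ)
    (a b c d : Fin n) (x : Fin n → ℝ) : ℝ :=
  pd c (Γ a d b) x - pd d (Γ a c b) x
    + ∑ e, (Γ a c e x * Γ e d b x - Γ a d e x * Γ e c b x)

/-- Kronecker delta. -/
def kron {n : ℕ} (a b : Fin n) : ℝ := if a = b then 1 else 0

/-- First trace of the non-metricity, `Q_a = Q_{ab}{}^b = g^{bc} Q_{abc}`. -/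
def qTr {n : ℕ} (g ginv : Fin n → Fin n → (Fin n → ℝ) → ℝ)
    (Γ : Fin n → Fin n → Fin n → (Fin n → ℝ) → ℝ) (a : Fin n) (x : Fin n → ℝ) : ℝ :=
  ∑ b, ∑ c, ginv b c x * nonmetQ g Γ a b c x

/-- Second trace of the non-metricity, `Q̃_a = Q^b{}_{ba} = g^{bc} Q_{cba}`. -/
def qTil {n : ℕ} (g ginv : Fin n → Fin n → (Fin n → ℝ) → ℝ)
    (Γ : Fin n → Fin n → Fin n → (Fin n → ℝ) → ℝ) (a : Fin n) (x : Fin n → ℝ) : ℝ :=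
  ∑ b, ∑ c, ginv b c x * nonmetQ g Γ c b a x

/-- Raised first trace `Q^a = g^{ae} Q_e`. -/
def qTrUp {n : ℕ} (g ginv : Fin n → Fin n → (Fin n → ℝ) → ℝ)
    (Γ : Fin n → Fin n → Fin n → (Fin n → ℝ) → ℝ) (a : Fin n) (x : Fin n → ℝ) : ℝ :=
  ∑ e, ginv a e x * qTr g ginv Γ e x

/-- Raised second trace `Q̃^a = g^{ae} Q̃_e`. -/
def qTilUp {n : ℕ} (g ginv : Fin n → Fin n → (Fin n → ℝ) → ℝ)
    (Γ : Fin n → Fin n → Fin n → (Fin n → ℝ) → ℝ) (a : Fin n) (x : Fin n → ℝ) : ℝ :=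
  ∑ e, ginv a e x * qTil g ginv Γ e x

/-- `Q_a{}^{bc} = g^{be} g^{cf} Q_{aef}`. -/
def qDU {n : ℕ} (g ginv : Fin n → Fin n → (Fin n → ℝ) → ℝ)
    (Γ : Fin n → Fin n → Fin n → (Fin n → ℝ) → ℝ) (a b c : Fin n) (x : Fin n → ℝ) : ℝ :=
  ∑ e, ∑ f, ginv b e x * ginv c f x * nonmetQ g Γ a e f x

/-- `Q^{bc}{}_a = g^{be} g^{cf} Q_{efa}`. -/
def qUD {n : ℕ} (g ginv : Fin n → Fin n → (Fin n → ℝ) → ℝ)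
    (Γ : Fin n → Fin n → Fin n → (Fin n → ℝ) → ℝ) (b c a : Fin n) (x : Fin n → ℝ) : ℝ :=
  ∑ e, ∑ f, ginv b e x * ginv c f x * nonmetQ g Γ e f a x

/-- The tensor `Λ_{Ra}{}^{cbd} = ¼(−g^{bc} δ^d_a + g^{cd} δ^b_a)`. -/
def lamR {n : ℕ} (ginv : Fin n → Fin n → (Fin n → ℝ) → ℝ)
    (a c b d : Fin n) (x : Fin n → ℝ) : ℝ :=
  (1 / 4) * (-(ginv b c x) * kron d a + ginv c d x * kron b a)

/-- The covariant divergence `∑_d ∇_d (√(−g) Λ_{Ra}{}^{cbd})` of the weight `−1`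
tensor density `λ_{Ra}{}^{cbd} = √(−g) Λ_{Ra}{}^{cbd}`:
`∇_d λ_a{}^{cbd} = ∂_d λ_a{}^{cbd} + Γ^c_{de} λ_a{}^{ebd} + Γ^b_{de} λ_a{}^{ced}
  + Γ^d_{de} λ_a{}^{cbe} − Γ^e_{da} λ_e{}^{cbd} − Γ^e_{de} λ_a{}^{cbd}`. -/
def covDivLamR {n : ℕ} (ginv : Fin n → Fin n → (Fin n → ℝ) → ℝ)
    (Γ : Fin n → Fin n → Fin n → (Fin n → ℝ) → ℝ)
    (sg : (Fin n → ℝ) → ℝ) (a c b : Fin n) (x : Fin n → ℝ) : ℝ :=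
  ∑ d, (pd d (fun y => sg y * lamR ginv a c b d y) x
    + ∑ e, Γ c d e x * sg x * lamR ginv a e b d x
    + ∑ e, Γ b d e x * sg x * lamR ginv a c e d x
    + ∑ e, Γ d d e x * sg x * lamR ginv a c b e x
    - ∑ e, Γ e d a x * sg x * lamR ginv e c b d x
    - ∑ e, Γ e d e x * sg x * lamR ginv a c b d x)

theorem pd_mul {n : ℕ} {f h : (Fin n → ℝ) → ℝ} {x : Fin n → ℝ}
    (hf : DifferentiableAt ℝ f x) (hh : DifferentiableAt ℝ h x) (i : Fin n) :
    pd i (fun y => f y * h y) x = pd i f x * h x + f x * pd i h x := by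
  unfold pd
  rw [fderiv_fun_mul hf hh]
  simp
  ring

theorem pd_sum {n : ℕ} {m : Type*} [Fintype m] {F : m → (Fin n → ℝ) → ℝ} {x : Fin n → ℝ}
    (hF : ∀ j, DifferentiableAt ℝ (F j) x) (i : Fin n) :
    pd i (fun y => ∑ j, F j y) x = ∑ j, pd i (F j) x := by
  unfold pd
  rw [fderiv_fun_sum (fun j _ => hF j)]
  simp

theorem pd_const_mul {n : ℕ} {f : (Fin n → ℝ) → ℝ} {x : Fin n → ℝ} (c : ℝ)
    (hf : DifferentiableAt ℝ f x) (i : Fin n) :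
    pd i (fun y => c * f y) x = c * pd i f x := by
  unfold pd
  rw [fderiv_const_mul hf]
  simp

theorem pd_add {n : ℕ} {f h : (Fin n → ℝ) → ℝ} {x : Fin n → ℝ}
    (hf : DifferentiableAt ℝ f x) (hh : DifferentiableAt ℝ h x) (i : Fin n) :
    pd i (fun y => f y + h y) x = pd i f x + pd i h x := by
  unfold pd
  rw [fderiv_fun_add hf hh]
  simp

theorem pd_const {n : ℕ} (c : ℝ) (x : Fin n → ℝ) (i : Fin n) :
    pd i (fun _ => c) x = 0 := by
  unfold pd
  simp

theorem pd_ginv {n : ℕ} (g ginv : Fin n → Fin n → (Fin n → ℝ) → ℝ)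
    (hgsym : ∀ a b, g a b = g b a)
    (hginvsym : ∀ a b, ginv a b = ginv b a)
    (hinv : ∀ (a b : Fin n) (x : Fin n → ℝ),
      ∑ c, ginv a c x * g c b x = if a = b then (1 : ℝ) else 0)
    (hgdiff : ∀ a b, Differentiable ℝ (g a b))
    (hginvdiff : ∀ a b, Differentiable ℝ (ginv a b))
    (b m d : Fin n) (x : Fin n → ℝ) :
    pd d (ginv b m) x = -∑ e, ∑ f, ginv b e x * ginv f m x * pd d (g e f) x := by
  have hGH : ∀ p q : Fin n, ∑ r, g p r x * ginv r q x = if p = q then (1:ℝ) else 0 := by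
    intro p q
    have h1 : ∑ r, g p r x * ginv r q x = ∑ r, ginv q r x * g r p x :=
      Finset.sum_congr rfl fun r _ => by rw [hgsym p r, hginvsym r q]; ring
    rw [h1, hinv q p x]
    simp [eq_comm]
  have hE : ∀ q, ∑ r, pd d (ginv b r) x * g r q x = -∑ r, ginv b r x * pd d (g r q) x := by
    intro q
    have h0 : pd d (fun y => ∑ r, ginv b r y * g r q y) x = 0 := by
      have hc : (fun y => ∑ r, ginv b r y * g r q y) = fun _ => (if b = q then (1:ℝ) else 0) := by
        funext y; exact hinv b q y
      rw [hc, pd_const]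
    rw [pd_sum (F := fun r y => ginv b r y * g r q y) (fun r => ((hginvdiff b r).mul (hgdiff r q)).differentiableAt) d] at h0
    have h1 : ∑ r : Fin n, pd d (fun y => ginv b r y * g r q y) x
        = ∑ r : Fin n, (pd d (ginv b r) x * g r q x + ginv b r x * pd d (g r q) x) :=
      Finset.sum_congr rfl fun r _ => pd_mul ((hginvdiff b r).differentiableAt)
        ((hgdiff r q).differentiableAt) d
    rw [h1, Finset.sum_add_distrib] at h0
    linarith
  have step1 : pd d (ginv b m) x = ∑ r, pd d (ginv b r) x * (if r = m then (1:ℝ) else 0) := by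
    simp [mul_ite]
  rw [step1]
  have step2 : ∑ r, pd d (ginv b r) x * (if r = m then (1:ℝ) else 0)
      = ∑ r, pd d (ginv b r) x * ∑ q, g r q x * ginv q m x :=
    Finset.sum_congr rfl fun r _ => by rw [hGH r m]
  rw [step2]
  have step3 : ∑ r, pd d (ginv b r) x * ∑ q, g r q x * ginv q m x
      = ∑ q, (∑ r, pd d (ginv b r) x * g r q x) * ginv q m x := by
    simp_rw [Finset.mul_sum, Finset.sum_mul]
    rw [Finset.sum_comm]
    exact Finset.sum_congr rfl fun q _ => Finset.sum_congr rfl fun r _ => by ring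
  rw [step3]
  have step4 : ∑ q, (∑ r, pd d (ginv b r) x * g r q x) * ginv q m x
      = ∑ q, (-∑ r, ginv b r x * pd d (g r q) x) * ginv q m x :=
    Finset.sum_congr rfl fun q _ => by rw [hE q]
  rw [step4]
  simp only [neg_mul, Finset.sum_neg_distrib, neg_inj, Finset.sum_mul]
  rw [Finset.sum_comm]
  exact Finset.sum_congr rfl fun e _ => Finset.sum_congr rfl fun f _ => by ring


theorem pd_lin {n : ℕ} {f h : (Fin n → ℝ) → ℝ} {x : Fin n → ℝ} (α β : ℝ)
    (hf : DifferentiableAt ℝ f x) (hh : DifferentiableAt ℝ h x) (i : Fin n) :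
    pd i (fun y => α * f y + β * h y) x = α * pd i f x + β * pd i h x := by
  unfold pd
  rw [fderiv_fun_add ((hf.const_mul α)) ((hh.const_mul β)), fderiv_const_mul hf, fderiv_const_mul hh]
  simp

theorem sum_kron₁ {n : ℕ} (a : Fin n) (f : Fin n → ℝ) : ∑ d, f d * kron d a = f a := by
  simp [kron, mul_ite]

theorem sum_kron₂ {n : ℕ} (a : Fin n) (f : Fin n → ℝ) : ∑ d, f d * kron a d = f a := by
  simp [kron, mul_ite, eq_comm]

theorem K1 {n : ℕ} (a : Fin n) (w : Fin n → Fin n → ℝ) :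
    ∑ x, ∑ e, w x e * kron x a = ∑ e, w a e := by
  calc ∑ x, ∑ e, w x e * kron x a = ∑ x, (∑ e, w x e) * kron x a := by
        exact Finset.sum_congr rfl fun x _ => (Finset.sum_mul _ _ _).symm
    _ = ∑ e, w a e := sum_kron₁ a fun x => ∑ e, w x e

theorem K2 {n : ℕ} (a : Fin n) (w : Fin n → Fin n → ℝ) :
    ∑ x, ∑ e, w x e * kron e a = ∑ x, w x a :=
  Finset.sum_congr rfl fun x _ => sum_kron₁ a (w x)

theorem K3 {n : ℕ} (w : Fin n → Fin n → ℝ) :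
    ∑ x, ∑ e, w x e * kron x e = ∑ x, w x x :=
  Finset.sum_congr rfl fun x _ => sum_kron₂ x (w x)

theorem K4 {n : ℕ} (b : Fin n) (w : Fin n → Fin n → ℝ) :
    ∑ x, ∑ e, w x e * kron b e = ∑ x, w x b :=
  Finset.sum_congr rfl fun x _ => sum_kron₂ b (w x)

theorem contract_ite {n : ℕ} (c : Fin n) (v : Fin n → ℝ) :
    ∑ d, v d * (if c = d then (1:ℝ) else 0) = v c := by
  simp [mul_ite]

theorem contract_sum {n : ℕ} {H G : Fin n → Fin n → ℝ}
    (hinv : ∀ p q, ∑ r, H p r * G r q = if p = q then (1:ℝ) else 0)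
    (c : Fin n) (v : Fin n → ℝ) :
    ∑ f, ∑ d, v d * (H c f * G f d) = v c := by
  rw [Finset.sum_comm]
  calc ∑ d, ∑ f, v d * (H c f * G f d)
      = ∑ d, v d * (if c = d then (1:ℝ) else 0) := by
        refine Finset.sum_congr rfl fun d _ => ?_
        rw [← Finset.mul_sum, hinv c d]
    _ = v c := contract_ite c v

theorem mul_sum₂ {n : ℕ} (cst : ℝ) (w : Fin n → Fin n → ℝ) :
    ∑ x, ∑ e, cst * w x e = cst * ∑ x, ∑ e, w x e := by
  simp [Finset.mul_sum]

theorem key_alg {n : ℕ} (G H : Fin n → Fin n → ℝ) (C : Fin n → Fin n → Fin n → ℝ)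
    (Dg : Fin n → Fin n → Fin n → ℝ) (S : ℝ)
    (hG : ∀ a b, G a b = G b a) (hH : ∀ a b, H a b = H b a)
    (hDg : ∀ d a b, Dg d a b = Dg d b a)
    (hinv : ∀ a b, ∑ c, H a c * G c b = if a = b then (1:ℝ) else 0)
    (hC : ∀ a b c, C a b c = C a c b)
    (a b c : Fin n) :
    ∑ d, ((1/4) * (-(kron d a) * ((1/2) * S * (∑ e, ∑ f, H e f * Dg d e f) * H b c
              + S * (-∑ e, ∑ f, H b e * H f c * Dg d e f))
          + kron b a * ((1/2) * S * (∑ e, ∑ f, H e f * Dg d e f) * H c d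
              + S * (-∑ e, ∑ f, H c e * H f d * Dg d e f)))
      + ∑ e, C c d e * S * ((1/4) * (-(H b e) * kron d a + H e d * kron b a))
      + ∑ e, C b d e * S * ((1/4) * (-(H e c) * kron d a + H c d * kron e a))
      + ∑ e, C d d e * S * ((1/4) * (-(H b c) * kron e a + H c e * kron b a))
      - ∑ e, C e d a * S * ((1/4) * (-(H b c) * kron d e + H c d * kron b e))
      - ∑ e, C e d e * S * ((1/4) * (-(H b c) * kron d a + H c d * kron b a)))
    = S / 4 * ((∑ e, ∑ f, H b e * H c f * (Dg a e f - (∑ d, C d a e * G d f) - (∑ d, C d a f * G e d)))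
        - (1/2) * (∑ e, ∑ f, H e f * (Dg a e f - (∑ d, C d a e * G d f) - (∑ d, C d a f * G e d))) * H b c
        + ((1/2) * (∑ e, H c e * (∑ p, ∑ q, H p q * (Dg e p q - (∑ d, C d e p * G d q) - (∑ d, C d e q * G p d))))
            - (∑ e, H c e * (∑ p, ∑ q, H p q * (Dg q p e - (∑ d, C d q p * G d e) - (∑ d, C d q e * G p d)))))
          * kron b a) := by
  -- Group A
  have hA : ∑ x : Fin n, 1 / 4 *
        (-kron x a * ((1 / 2 * S * ∑ e, ∑ f, H e f * Dg x e f) * H b c +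
              S * -∑ e, ∑ f, H b e * H f c * Dg x e f) +
          kron b a * ((1 / 2 * S * ∑ e, ∑ f, H e f * Dg x e f) * H c x +
              S * -∑ e, ∑ f, H c e * H f x * Dg x e f))
      = -(S/8) * (∑ e, ∑ f, H e f * Dg a e f) * H b c
        + (S/4) * (∑ e, ∑ f, H b e * H c f * Dg a e f)
        + kron b a * ((S/8) * (∑ x, (∑ e, ∑ f, H e f * Dg x e f) * H c x)
            - (S/4) * (∑ x, ∑ e, ∑ f, H c e * H f x * Dg x e f)) := by
    have hT2c : (∑ e, ∑ f, H b e * H f c * Dg a e f) = ∑ e, ∑ f, H b e * H c f * Dg a e f :=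
      Finset.sum_congr rfl fun e _ => Finset.sum_congr rfl fun f _ => by rw [hH f c]
    calc ∑ x : Fin n, 1 / 4 *
          (-kron x a * ((1 / 2 * S * ∑ e, ∑ f, H e f * Dg x e f) * H b c +
                S * -∑ e, ∑ f, H b e * H f c * Dg x e f) +
            kron b a * ((1 / 2 * S * ∑ e, ∑ f, H e f * Dg x e f) * H c x +
                S * -∑ e, ∑ f, H c e * H f x * Dg x e f))
        = ∑ x : Fin n, ((-(1/4) * ((1 / 2 * S * ∑ e, ∑ f, H e f * Dg x e f) * H b c +
                S * -∑ e, ∑ f, H b e * H f c * Dg x e f)) * kron x a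
            + (1/4 * kron b a) * ((1/2 * S) * ((∑ e, ∑ f, H e f * Dg x e f) * H c x)
                + (-S) * ∑ e, ∑ f, H c e * H f x * Dg x e f)) :=
          Finset.sum_congr rfl fun x _ => by ring
      _ = (∑ x : Fin n, (-(1/4) * ((1 / 2 * S * ∑ e, ∑ f, H e f * Dg x e f) * H b c +
                S * -∑ e, ∑ f, H b e * H f c * Dg x e f)) * kron x a)
          + ∑ x : Fin n, (1/4 * kron b a) * ((1/2 * S) * ((∑ e, ∑ f, H e f * Dg x e f) * H c x)
                + (-S) * ∑ e, ∑ f, H c e * H f x * Dg x e f) := Finset.sum_add_distrib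
      _ = (-(1/4) * ((1 / 2 * S * ∑ e, ∑ f, H e f * Dg a e f) * H b c +
                S * -∑ e, ∑ f, H b e * H f c * Dg a e f))
          + (1/4 * kron b a) * ∑ x : Fin n, ((1/2 * S) * ((∑ e, ∑ f, H e f * Dg x e f) * H c x)
                + (-S) * ∑ e, ∑ f, H c e * H f x * Dg x e f) := by
          refine congrArg₂ (· + ·) ?_ ?_
          · exact sum_kron₁ a fun x => -(1/4) * ((1 / 2 * S * ∑ e, ∑ f, H e f * Dg x e f) * H b c +
                S * -∑ e, ∑ f, H b e * H f c * Dg x e f)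
          · exact (Finset.mul_sum _ _ _).symm
      _ = (-(1/4) * ((1 / 2 * S * ∑ e, ∑ f, H e f * Dg a e f) * H b c +
                S * -∑ e, ∑ f, H b e * H f c * Dg a e f))
          + (1/4 * kron b a) * ((1/2 * S) * (∑ x, (∑ e, ∑ f, H e f * Dg x e f) * H c x)
                + (-S) * ∑ x, ∑ e, ∑ f, H c e * H f x * Dg x e f) := by
          rw [Finset.sum_add_distrib, ← Finset.mul_sum, ← Finset.mul_sum]
      _ = -(S/8) * (∑ e, ∑ f, H e f * Dg a e f) * H b c
        + (S/4) * (∑ e, ∑ f, H b e * H c f * Dg a e f)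
        + kron b a * ((S/8) * (∑ x, (∑ e, ∑ f, H e f * Dg x e f) * H c x)
            - (S/4) * (∑ x, ∑ e, ∑ f, H c e * H f x * Dg x e f)) := by
          rw [hT2c]; ring
  -- Group B
  have hB : ∑ x : Fin n, ∑ e, C c x e * S * (1 / 4 * (-H b e * kron x a + H e x * kron b a))
      = -(S/4) * (∑ e, H b e * C c a e) + (S/4 * kron b a) * (∑ x, ∑ e, C c x e * H e x) := by
    calc ∑ x : Fin n, ∑ e, C c x e * S * (1 / 4 * (-H b e * kron x a + H e x * kron b a))
        = ∑ x : Fin n, ∑ e, ((-(S/4) * (H b e * C c x e)) * kron x a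
            + (S/4 * kron b a) * (C c x e * H e x)) :=
          Finset.sum_congr rfl fun x _ => Finset.sum_congr rfl fun e _ => by ring
      _ = (∑ x : Fin n, ∑ e, (-(S/4) * (H b e * C c x e)) * kron x a)
          + ∑ x : Fin n, ∑ e, (S/4 * kron b a) * (C c x e * H e x) := by
          simp only [Finset.sum_add_distrib]
      _ = (∑ e, -(S/4) * (H b e * C c a e)) + (S/4 * kron b a) * (∑ x, ∑ e, C c x e * H e x) := by
          refine congrArg₂ (· + ·) ?_ ?_
          · exact K1 a fun x e => -(S/4) * (H b e * C c x e)
          · exact mul_sum₂ _ _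
      _ = -(S/4) * (∑ e, H b e * C c a e) + (S/4 * kron b a) * (∑ x, ∑ e, C c x e * H e x) := by
          rw [← Finset.mul_sum]
  -- Group C3 (vanishes)
  have hC3 : ∑ x : Fin n, ∑ e, C b x e * S * (1 / 4 * (-H e c * kron x a + H c x * kron e a))
      = 0 := by
    calc ∑ x : Fin n, ∑ e, C b x e * S * (1 / 4 * (-H e c * kron x a + H c x * kron e a))
        = ∑ x : Fin n, ∑ e, ((-(S/4) * (C b x e * H e c)) * kron x a
            + ((S/4) * (C b x e * H c x)) * kron e a) :=
          Finset.sum_congr rfl fun x _ => Finset.sum_congr rfl fun e _ => by ring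
      _ = (∑ x : Fin n, ∑ e, (-(S/4) * (C b x e * H e c)) * kron x a)
          + ∑ x : Fin n, ∑ e, ((S/4) * (C b x e * H c x)) * kron e a := by
          simp only [Finset.sum_add_distrib]
      _ = (∑ e, -(S/4) * (C b a e * H e c)) + ∑ x, (S/4) * (C b x a * H c x) := by
          refine congrArg₂ (· + ·) ?_ ?_
          · exact K1 a fun x e => -(S/4) * (C b x e * H e c)
          · exact K2 a fun x e => (S/4) * (C b x e * H c x)
      _ = 0 := by
          have h2 : ∑ x, (S/4) * (C b x a * H c x) = ∑ x, (S/4) * (C b a x * H x c) :=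
            Finset.sum_congr rfl fun x _ => by rw [← hC b a x, ← hH x c]
          rw [h2, ← Finset.mul_sum, ← Finset.mul_sum]
          ring
  -- Group C4
  have hC4 : ∑ x : Fin n, ∑ e, C x x e * S * (1 / 4 * (-H b c * kron e a + H c e * kron b a))
      = -(S/4) * H b c * (∑ x, C x x a) + (S/4 * kron b a) * (∑ x, ∑ e, C e x e * H c x) := by
    calc ∑ x : Fin n, ∑ e, C x x e * S * (1 / 4 * (-H b c * kron e a + H c e * kron b a))
        = ∑ x : Fin n, ∑ e, (((-(S/4) * H b c) * C x x e) * kron e a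
            + (S/4 * kron b a) * (C x x e * H c e)) :=
          Finset.sum_congr rfl fun x _ => Finset.sum_congr rfl fun e _ => by ring
      _ = (∑ x : Fin n, ∑ e, ((-(S/4) * H b c) * C x x e) * kron e a)
          + ∑ x : Fin n, ∑ e, (S/4 * kron b a) * (C x x e * H c e) := by
          simp only [Finset.sum_add_distrib]
      _ = (∑ x, (-(S/4) * H b c) * C x x a) + (S/4 * kron b a) * (∑ x, ∑ e, C x x e * H c e) := by
          refine congrArg₂ (· + ·) ?_ ?_
          · exact K2 a fun x e => (-(S/4) * H b c) * C x x e
          · exact mul_sum₂ _ _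
      _ = -(S/4) * H b c * (∑ x, C x x a) + (S/4 * kron b a) * (∑ x, ∑ e, C e x e * H c x) := by
          have hT10 : (∑ x, ∑ e, C x x e * H c e) = ∑ x, ∑ e, C e x e * H c x := by
            conv_lhs => rw [Finset.sum_comm]
            exact Finset.sum_congr rfl fun o _ => Finset.sum_congr rfl fun i _ => by rw [hC i i o]
          rw [hT10, ← Finset.mul_sum]
  -- Group C5
  have hC5 : ∑ x : Fin n, ∑ e, C e x a * S * (1 / 4 * (-H b c * kron x e + H c x * kron b e))
      = -(S/4) * H b c * (∑ x, C x x a) + (S/4) * (∑ e, H c e * C b a e) := by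
    calc ∑ x : Fin n, ∑ e, C e x a * S * (1 / 4 * (-H b c * kron x e + H c x * kron b e))
        = ∑ x : Fin n, ∑ e, (((-(S/4) * H b c) * C e x a) * kron x e
            + ((S/4) * (C e x a * H c x)) * kron b e) :=
          Finset.sum_congr rfl fun x _ => Finset.sum_congr rfl fun e _ => by ring
      _ = (∑ x : Fin n, ∑ e, ((-(S/4) * H b c) * C e x a) * kron x e)
          + ∑ x : Fin n, ∑ e, ((S/4) * (C e x a * H c x)) * kron b e := by
          simp only [Finset.sum_add_distrib]
      _ = (∑ x, (-(S/4) * H b c) * C x x a) + ∑ x, (S/4) * (C b x a * H c x) := by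
          refine congrArg₂ (· + ·) ?_ ?_
          · exact K3 fun x e => (-(S/4) * H b c) * C e x a
          · exact K4 b fun x e => (S/4) * (C e x a * H c x)
      _ = -(S/4) * H b c * (∑ x, C x x a) + (S/4) * (∑ e, H c e * C b a e) := by
          have h5 : ∑ x, (S/4) * (C b x a * H c x) = ∑ x, (S/4) * (H c x * C b a x) :=
            Finset.sum_congr rfl fun x _ => by rw [← hC b a x]; ring
          rw [h5, ← Finset.mul_sum, ← Finset.mul_sum]
  -- Group C6
  have hC6 : ∑ x : Fin n, ∑ e, C e x e * S * (1 / 4 * (-H b c * kron x a + H c x * kron b a))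
      = -(S/4) * H b c * (∑ e, C e a e) + (S/4 * kron b a) * (∑ x, ∑ e, C e x e * H c x) := by
    calc ∑ x : Fin n, ∑ e, C e x e * S * (1 / 4 * (-H b c * kron x a + H c x * kron b a))
        = ∑ x : Fin n, ∑ e, (((-(S/4) * H b c) * C e x e) * kron x a
            + (S/4 * kron b a) * (C e x e * H c x)) :=
          Finset.sum_congr rfl fun x _ => Finset.sum_congr rfl fun e _ => by ring
      _ = (∑ x : Fin n, ∑ e, ((-(S/4) * H b c) * C e x e) * kron x a)
          + ∑ x : Fin n, ∑ e, (S/4 * kron b a) * (C e x e * H c x) := by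
          simp only [Finset.sum_add_distrib]
      _ = (∑ e, (-(S/4) * H b c) * C e a e) + (S/4 * kron b a) * (∑ x, ∑ e, C e x e * H c x) := by
          refine congrArg₂ (· + ·) ?_ ?_
          · exact K1 a fun x e => (-(S/4) * H b c) * C e x e
          · exact mul_sum₂ _ _
      _ = -(S/4) * H b c * (∑ e, C e a e) + (S/4 * kron b a) * (∑ x, ∑ e, C e x e * H c x) := by
          rw [← Finset.mul_sum]
  -- trace of nonmetricity contraction
  have hQtr : ∀ m : Fin n, (∑ p, ∑ q, H p q * (Dg m p q - (∑ d, C d m p * G d q) - (∑ d, C d m q * G p d)))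
      = (∑ p, ∑ q, H p q * Dg m p q) - (∑ p, C p m p) - (∑ p, C p m p) := by
    intro m
    have hsplit : (∑ p, ∑ q, H p q * (Dg m p q - (∑ d, C d m p * G d q) - (∑ d, C d m q * G p d)))
        = (∑ p, ∑ q, H p q * Dg m p q) - (∑ p, ∑ q, H p q * ∑ d, C d m p * G d q)
          - (∑ p, ∑ q, H p q * ∑ d, C d m q * G p d) := by
      simp only [mul_sub, Finset.sum_sub_distrib]
    rw [hsplit]
    have hY : (∑ p, ∑ q, H p q * ∑ d, C d m p * G d q) = ∑ p, C p m p := by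
      refine Finset.sum_congr rfl fun p _ => ?_
      calc ∑ q, H p q * ∑ d, C d m p * G d q
          = ∑ q, ∑ d, C d m p * (H p q * G q d) := by
            refine Finset.sum_congr rfl fun q _ => ?_
            rw [Finset.mul_sum]
            exact Finset.sum_congr rfl fun d _ => by rw [hG d q]; ring
        _ = C p m p := contract_sum hinv p fun d => C d m p
    have hZ : (∑ p, ∑ q, H p q * ∑ d, C d m q * G p d) = ∑ p, C p m p := by
      conv_lhs => rw [Finset.sum_comm]
      refine Finset.sum_congr rfl fun q _ => ?_
      calc ∑ p, H p q * ∑ d, C d m q * G p d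
          = ∑ p, ∑ d, C d m q * (H q p * G p d) := by
            refine Finset.sum_congr rfl fun p _ => ?_
            rw [Finset.mul_sum]
            exact Finset.sum_congr rfl fun d _ => by rw [hH p q]; ring
        _ = C q m q := contract_sum hinv q fun d => C d m q
    rw [hY, hZ]
  -- RHS first block
  have hR1 : (∑ e, ∑ f, H b e * H c f * (Dg a e f - (∑ d, C d a e * G d f) - (∑ d, C d a f * G e d)))
      = (∑ e, ∑ f, H b e * H c f * Dg a e f) - (∑ e, H b e * C c a e) - (∑ e, H c e * C b a e) := by
    have hsplit : (∑ e, ∑ f, H b e * H c f * (Dg a e f - (∑ d, C d a e * G d f) - (∑ d, C d a f * G e d)))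
        = (∑ e, ∑ f, H b e * H c f * Dg a e f) - (∑ e, ∑ f, H b e * H c f * ∑ d, C d a e * G d f)
          - (∑ e, ∑ f, H b e * H c f * ∑ d, C d a f * G e d) := by
      simp only [mul_sub, Finset.sum_sub_distrib]
    rw [hsplit]
    have hY : (∑ e, ∑ f, H b e * H c f * ∑ d, C d a e * G d f) = ∑ e, H b e * C c a e := by
      refine Finset.sum_congr rfl fun e _ => ?_
      calc ∑ f, H b e * H c f * ∑ d, C d a e * G d f
          = ∑ f, ∑ d, (H b e * C d a e) * (H c f * G f d) := by
            refine Finset.sum_congr rfl fun f _ => ?_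
            rw [Finset.mul_sum]
            exact Finset.sum_congr rfl fun d _ => by rw [hG d f]; ring
        _ = H b e * C c a e := contract_sum hinv c fun d => H b e * C d a e
    have hZ : (∑ e, ∑ f, H b e * H c f * ∑ d, C d a f * G e d) = ∑ e, H c e * C b a e := by
      conv_lhs => rw [Finset.sum_comm]
      refine Finset.sum_congr rfl fun f _ => ?_
      calc ∑ e, H b e * H c f * ∑ d, C d a f * G e d
          = ∑ e, ∑ d, (H c f * C d a f) * (H b e * G e d) := by
            refine Finset.sum_congr rfl fun e _ => ?_
            rw [Finset.mul_sum]
            exact Finset.sum_congr rfl fun d _ => by ring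
        _ = H c f * C b a f := contract_sum hinv b fun d => H c f * C d a f
    rw [hY, hZ]
  -- RHS qTrUp block
  have hR3 : (∑ e, H c e * (∑ p, ∑ q, H p q * (Dg e p q - (∑ d, C d e p * G d q) - (∑ d, C d e q * G p d))))
      = (∑ x, (∑ e, ∑ f, H e f * Dg x e f) * H c x) - 2 * (∑ x, ∑ e, C e x e * H c x) := by
    calc (∑ e, H c e * (∑ p, ∑ q, H p q * (Dg e p q - (∑ d, C d e p * G d q) - (∑ d, C d e q * G p d))))
        = ∑ e, H c e * ((∑ p, ∑ q, H p q * Dg e p q) - (∑ p, C p e p) - (∑ p, C p e p)) :=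
          Finset.sum_congr rfl fun e _ => by rw [hQtr e]
      _ = ∑ e, ((∑ p, ∑ q, H p q * Dg e p q) * H c e - 2 * ((∑ p, C p e p) * H c e)) :=
          Finset.sum_congr rfl fun e _ => by ring
      _ = (∑ e, (∑ p, ∑ q, H p q * Dg e p q) * H c e) - ∑ e, 2 * ((∑ p, C p e p) * H c e) := by
          simp only [Finset.sum_sub_distrib]
      _ = (∑ x, (∑ e, ∑ f, H e f * Dg x e f) * H c x) - 2 * (∑ x, ∑ e, C e x e * H c x) := by
          have h8 : (∑ e : Fin n, 2 * ((∑ p, C p e p) * H c e)) = 2 * ∑ x, ∑ e, C e x e * H c x := by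
            rw [← Finset.mul_sum]
            congr 1
            exact Finset.sum_congr rfl fun e _ => Finset.sum_mul _ _ _
          rw [h8]
  -- RHS qTilUp block
  have h4a : (∑ e, H c e * (∑ p, ∑ q, H p q * Dg q p e))
      = ∑ x, ∑ e, ∑ f, H c e * H f x * Dg x e f := by
    calc (∑ e, H c e * (∑ p, ∑ q, H p q * Dg q p e))
        = ∑ e, ∑ p, ∑ q, H c e * (H p q * Dg q p e) := by
          refine Finset.sum_congr rfl fun e _ => ?_
          rw [Finset.mul_sum]
          exact Finset.sum_congr rfl fun p _ => by rw [Finset.mul_sum]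
      _ = ∑ e, ∑ q, ∑ p, H c e * (H p q * Dg q p e) :=
          Finset.sum_congr rfl fun e _ => Finset.sum_comm
      _ = ∑ q, ∑ e, ∑ p, H c e * (H p q * Dg q p e) := Finset.sum_comm
      _ = ∑ x, ∑ e, ∑ f, H c e * H f x * Dg x e f := by
          refine Finset.sum_congr rfl fun q _ => Finset.sum_congr rfl fun e _ =>
            Finset.sum_congr rfl fun p _ => ?_
          rw [hDg q e p]; ring
  have h4b : (∑ e, H c e * (∑ p, ∑ q, H p q * ∑ d, C d q p * G d e))
      = ∑ x, ∑ e, C c x e * H e x := by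
    calc (∑ e, H c e * (∑ p, ∑ q, H p q * ∑ d, C d q p * G d e))
        = ∑ e, ∑ d, (∑ p, ∑ q, H p q * C d q p) * (H c e * G e d) := by
          refine Finset.sum_congr rfl fun e _ => ?_
          calc H c e * (∑ p, ∑ q, H p q * ∑ d, C d q p * G d e)
              = ∑ p, ∑ q, ∑ d, (H p q * C d q p) * (H c e * G e d) := by
                rw [Finset.mul_sum]
                refine Finset.sum_congr rfl fun p _ => ?_
                rw [Finset.mul_sum]
                refine Finset.sum_congr rfl fun q _ => ?_
                rw [show H c e * (H p q * ∑ d, C d q p * G d e)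
                    = (H c e * H p q) * ∑ d, C d q p * G d e from by ring, Finset.mul_sum]
                exact Finset.sum_congr rfl fun d _ => by rw [hG d e]; ring
            _ = ∑ p, ∑ d, ∑ q, (H p q * C d q p) * (H c e * G e d) :=
                Finset.sum_congr rfl fun p _ => Finset.sum_comm
            _ = ∑ d, ∑ p, ∑ q, (H p q * C d q p) * (H c e * G e d) := Finset.sum_comm
            _ = ∑ d, (∑ p, ∑ q, H p q * C d q p) * (H c e * G e d) := by
                refine Finset.sum_congr rfl fun d _ => ?_
                rw [Finset.sum_mul]
                exact Finset.sum_congr rfl fun p _ => by rw [Finset.sum_mul]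
      _ = ∑ p, ∑ q, H p q * C c q p :=
          contract_sum hinv c fun d => ∑ p, ∑ q, H p q * C d q p
      _ = ∑ x, ∑ e, C c x e * H e x := by
          conv_lhs => rw [Finset.sum_comm]
          exact Finset.sum_congr rfl fun q _ => Finset.sum_congr rfl fun p _ => by ring
  have h4c : (∑ e, H c e * (∑ p, ∑ q, H p q * ∑ d, C d q e * G p d))
      = ∑ x, ∑ e, C e x e * H c x := by
    calc (∑ e, H c e * (∑ p, ∑ q, H p q * ∑ d, C d q e * G p d))
        = ∑ e, ∑ q, H c e * C q q e := by
          refine Finset.sum_congr rfl fun e _ => ?_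
          calc H c e * (∑ p, ∑ q, H p q * ∑ d, C d q e * G p d)
              = H c e * ∑ q, C q q e := by
                congr 1
                calc (∑ p, ∑ q, H p q * ∑ d, C d q e * G p d)
                    = ∑ p, ∑ q, ∑ d, C d q e * (H q p * G p d) := by
                      refine Finset.sum_congr rfl fun p _ => ?_
                      refine Finset.sum_congr rfl fun q _ => ?_
                      rw [Finset.mul_sum]
                      exact Finset.sum_congr rfl fun d _ => by rw [hH p q]; ring
                  _ = ∑ q, ∑ p, ∑ d, C d q e * (H q p * G p d) := Finset.sum_comm
                  _ = ∑ q, ∑ d, ∑ p, C d q e * (H q p * G p d) :=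
                      Finset.sum_congr rfl fun q _ => Finset.sum_comm
                  _ = ∑ q, ∑ d, C d q e * (if q = d then (1:ℝ) else 0) := by
                      refine Finset.sum_congr rfl fun q _ => Finset.sum_congr rfl fun d _ => ?_
                      rw [← Finset.mul_sum, hinv q d]
                  _ = ∑ q, C q q e :=
                      Finset.sum_congr rfl fun q _ => contract_ite q fun d => C d q e
            _ = ∑ q, H c e * C q q e := Finset.mul_sum _ _ _
      _ = ∑ x, ∑ e, C e x e * H c x :=
          Finset.sum_congr rfl fun e _ => Finset.sum_congr rfl fun q _ => by rw [hC q q e]; ring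
  have hR4 : (∑ e, H c e * (∑ p, ∑ q, H p q * (Dg q p e - (∑ d, C d q p * G d e) - (∑ d, C d q e * G p d))))
      = (∑ x, ∑ e, ∑ f, H c e * H f x * Dg x e f) - (∑ x, ∑ e, C c x e * H e x)
        - (∑ x, ∑ e, C e x e * H c x) := by
    have inner_split : ∀ e : Fin n, (∑ p, ∑ q, H p q * (Dg q p e - (∑ d, C d q p * G d e) - (∑ d, C d q e * G p d)))
        = (∑ p, ∑ q, H p q * Dg q p e) - (∑ p, ∑ q, H p q * ∑ d, C d q p * G d e)
          - (∑ p, ∑ q, H p q * ∑ d, C d q e * G p d) := fun e => by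
      simp only [mul_sub, Finset.sum_sub_distrib]
    calc (∑ e, H c e * (∑ p, ∑ q, H p q * (Dg q p e - (∑ d, C d q p * G d e) - (∑ d, C d q e * G p d))))
        = ∑ e, (H c e * (∑ p, ∑ q, H p q * Dg q p e)
            - H c e * (∑ p, ∑ q, H p q * ∑ d, C d q p * G d e)
            - H c e * (∑ p, ∑ q, H p q * ∑ d, C d q e * G p d)) :=
          Finset.sum_congr rfl fun e _ => by rw [inner_split e, mul_sub, mul_sub]
      _ = (∑ e, H c e * (∑ p, ∑ q, H p q * Dg q p e))
          - (∑ e, H c e * (∑ p, ∑ q, H p q * ∑ d, C d q p * G d e))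
          - (∑ e, H c e * (∑ p, ∑ q, H p q * ∑ d, C d q e * G p d)) := by
          simp only [Finset.sum_sub_distrib]
      _ = (∑ x, ∑ e, ∑ f, H c e * H f x * Dg x e f) - (∑ x, ∑ e, C c x e * H e x)
          - (∑ x, ∑ e, C e x e * H c x) := by rw [h4a, h4b, h4c]
  simp only [Finset.sum_add_distrib, Finset.sum_sub_distrib]
  rw [hA, hB, hC3, hC4, hC5, hC6, hR1, hQtr a, hR3, hR4]
  ring



/-- **The Lagrange multiplier solution in STEGR**: the tensor
`Λ_{Ra}{}^{cbd} = ¼(−g^{bc}δ^d_a + g^{cd}δ^b_a)` is antisymmetric in its last two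
indices `b, d`, and for a torsion-free, curvature-free connection it satisfies
`4 (1/√(−g)) ∇_d(√(−g) Λ_{Ra}{}^{cbd}) = Q_a{}^{bc} − ½ Q_a g^{bc} + (½Q^c − Q̃^c) δ^b_a`. -/
theorem lamR_divergence_identity {n : ℕ}
    (g ginv : Fin n → Fin n → (Fin n → ℝ) → ℝ)
    (Γ : Fin n → Fin n → Fin n → (Fin n → ℝ) → ℝ)
    (sg : (Fin n → ℝ) → ℝ)
    (hgsym : ∀ a b, g a b = g b a)
    (hginvsym : ∀ a b, ginv a b = ginv b a)
    (hinv : ∀ (a b : Fin n) (x : Fin n → ℝ),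
      ∑ c, ginv a c x * g c b x = if a = b then (1 : ℝ) else 0)
    (hgdiff : ∀ a b, Differentiable ℝ (g a b))
    (hginvdiff : ∀ a b, Differentiable ℝ (ginv a b))
    (hsgdiff : Differentiable ℝ sg)
    (hsgpos : ∀ x, 0 < sg x)
    (hsg : ∀ (d : Fin n) (x : Fin n → ℝ),
      pd d sg x = (1 / 2) * sg x * ∑ b, ∑ c, ginv b c x * pd d (g b c) x)
    (htorsionfree : ∀ a b c x, Γ a b c x = Γ a c b x)
    (hflat : ∀ a b c d x, riem Γ a b c d x = 0) :
    (∀ (a c b d : Fin n) (x : Fin n → ℝ), lamR ginv a c b d x = -lamR ginv a c d b x)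
    ∧ (∀ (a b c : Fin n) (x : Fin n → ℝ),
        4 * (sg x)⁻¹ * covDivLamR ginv Γ sg a c b x
          = qDU g ginv Γ a b c x - (1 / 2) * qTr g ginv Γ a x * ginv b c x
            + ((1 / 2) * qTrUp g ginv Γ c x - qTilUp g ginv Γ c x) * kron b a) := by
  constructor
  · intro a c b d x
    simp only [lamR]
    rw [hginvsym d c, hginvsym c b]
    ring
  · intro a b c x
    have hS : sg x ≠ 0 := ne_of_gt (hsgpos x)
    have hpd : ∀ d : Fin n, pd d (fun y => sg y * lamR ginv a c b d y) x
        = (1/4) * (-(kron d a) * ((1/2) * sg x * (∑ e, ∑ f, ginv e f x * pd d (g e f) x) * ginv b c x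
              + sg x * (-∑ e, ∑ f, ginv b e x * ginv f c x * pd d (g e f) x))
          + kron b a * ((1/2) * sg x * (∑ e, ∑ f, ginv e f x * pd d (g e f) x) * ginv c d x
              + sg x * (-∑ e, ∑ f, ginv c e x * ginv f d x * pd d (g e f) x))) := by
      intro d
      have hfun : lamR ginv a c b d
          = fun y => (-(1/4) * kron d a) * ginv b c y + ((1/4) * kron b a) * ginv c d y :=
        funext fun y => by simp only [lamR]; ring
      have hlamdiff : DifferentiableAt ℝ (lamR ginv a c b d) x := by
        rw [hfun]
        exact ((hginvdiff b c x).const_mul _).add ((hginvdiff c d x).const_mul _)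
      have h1 : pd d (fun y => sg y * lamR ginv a c b d y) x
          = pd d sg x * lamR ginv a c b d x + sg x * pd d (lamR ginv a c b d) x :=
        pd_mul (hsgdiff x) hlamdiff d
      have h2 : pd d (lamR ginv a c b d) x
          = (-(1/4) * kron d a) * pd d (ginv b c) x + ((1/4) * kron b a) * pd d (ginv c d) x := by
        rw [hfun]
        exact pd_lin _ _ (hginvdiff b c x) (hginvdiff c d x) d
      rw [h1, h2, hsg d x,
        pd_ginv g ginv hgsym hginvsym hinv hgdiff hginvdiff b c d x,
        pd_ginv g ginv hgsym hginvsym hinv hgdiff hginvdiff c d d x]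
      simp only [lamR]
      ring
    have halg := key_alg (fun p q => g p q x) (fun p q => ginv p q x)
      (fun p q r => Γ p q r x) (fun d e f => pd d (g e f) x) (sg x)
      (fun p q => congrFun (hgsym p q) x) (fun p q => congrFun (hginvsym p q) x)
      (fun d p q => congrFun (congrArg (pd d) (hgsym p q)) x) (fun p q => hinv p q x)
      (fun p q r => htorsionfree p q r x) a b c
    have key : covDivLamR ginv Γ sg a c b x
        = sg x / 4 * (qDU g ginv Γ a b c x - (1 / 2) * qTr g ginv Γ a x * ginv b c x
            + ((1 / 2) * qTrUp g ginv Γ c x - qTilUp g ginv Γ c x) * kron b a) := by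
      simp only [covDivLamR, qDU, qTr, qTrUp, qTil, qTilUp, nonmetQ]
      simp only [hpd]
      simp only [lamR]
      exact halg
    rw [key]
    field_simp
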